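/- Define b^F(v) = ((2/3)v³ - (4/3)β₂v³ + β₂v²) / (v² - 2α₂v² + 2α₂v) for v ∈ (0,1] and b^F(0) = 0, where α₂, β₂ ∈ (0,1]. Then b^F is increasing on [0,1] if and only if β₂ ≤ 1/2 or α₂ ≥ (2β₂ - 1)/(2 - β₂). -/

import Mathlib

theorem stmt_10 (α₂ β₂ : ℝ) (hα : α₂ ∈ Set.Ioc (0 : ℝ) 1) (hβ : β₂ ∈ Set.Ioc (0 : ℝ) 1)
    (bF : ℝ → ℝ)
    (hbF : ∀ v : ℝ, v ∈ Set.Ioc (0 : ℝ) 1 →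
      bF v = ((2 / 3) * v ^ 3 - (4 / 3) * β₂ * v ^ 3 + β₂ * v ^ 2) /
        (v ^ 2 - 2 * α₂ * v ^ 2 + 2 * α₂ * v))
    (hbF0 : bF 0 = 0) :
    StrictMonoOn bF (Set.Icc 0 1) ↔ β₂ ≤ 1 / 2 ∨ α₂ ≥ (2 * β₂ - 1) / (2 - β₂) := by
  obtain ⟨ha0, ha1⟩ := hα
  obtain ⟨hb0, hb1⟩ := hβ
  set A : ℝ := 2/3 - 4/3 * β₂ with hA
  set C : ℝ := 1 - 2*α₂ with hC
  set D : ℝ := 2*α₂ with hD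
  set F : ℝ → ℝ := fun v => (A*v^2 + β₂*v)/(C*v + D) with hF
  set G : ℝ → ℝ := fun v => (A*C*v^2 + 2*A*D*v + β₂*D) with hG
  -- denominator positive on [0,1]
  have hden : ∀ v ∈ Set.Icc (0:ℝ) 1, 0 < C*v + D := by
    intro v hv
    rcases eq_or_lt_of_le hv.1 with h | h
    · rw [hC, hD, ← h]; nlinarith
    · nlinarith [mul_nonneg ha0.le (by linarith [hv.2] : (0:ℝ) ≤ 1 - v)]
  -- bF agrees with F on [0,1]
  have hEq : ∀ v ∈ Set.Icc (0:ℝ) 1, bF v = F v := by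
    intro v hv
    rcases eq_or_lt_of_le hv.1 with h | h
    · rw [← h, hbF0, hF]; simp
    · rw [hbF v ⟨h, hv.2⟩, hF]
      have hd : C*v + D ≠ 0 := ne_of_gt (hden v hv)
      have hv0 : v ≠ 0 := ne_of_gt h
      have hd2 : v ^ 2 - 2 * α₂ * v ^ 2 + 2 * α₂ * v ≠ 0 := by
        have : v ^ 2 - 2 * α₂ * v ^ 2 + 2 * α₂ * v = v * (C*v + D) := by
          rw [hC, hD]; ring
        rw [this]; exact mul_ne_zero hv0 hd
      rw [div_eq_div_iff hd2 hd, hA, hC, hD]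
      ring
  -- derivative of F
  have hder : ∀ v, C*v + D ≠ 0 → HasDerivAt F (G v / (C*v + D)^2) v := by
    intro v hd
    have hnum : HasDerivAt (fun v : ℝ => A*v^2 + β₂*v) (A*(2*v) + β₂*1) v := by
      exact (((hasDerivAt_pow 2 v).const_mul A).add ((hasDerivAt_id v).const_mul β₂)).congr_deriv
        (by norm_num)
    have hd' : HasDerivAt (fun v : ℝ => C*v + D) (C*1) v :=
      ((hasDerivAt_id v).const_mul C).add_const D
    have := hnum.div hd' hd
    convert this using 1
    case e'_4 => rfl
    case e'_5 => rfl
    case e'_8 => rfl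
    rw [hG]
    field_simp
    ring
  have hFcont : ContinuousOn F (Set.Icc 0 1) := by
    apply ContinuousOn.div (by fun_prop) (by fun_prop)
    exact fun v hv => ne_of_gt (hden v hv)
  constructor
  · -- forward: strict mono implies condition
    intro hmono
    by_contra hcon
    push_neg at hcon
    obtain ⟨hb2, hlt⟩ := hcon
    have hlt' : α₂ * (2 - β₂) < 2*β₂ - 1 :=
      (lt_div_iff₀ (by linarith : (0:ℝ) < 2 - β₂)).1 hlt
    have hG1 : G 1 < 0 := by
      show (2/3 - 4/3*β₂)*(1-2*α₂)*1^2 + 2*(2/3 - 4/3*β₂)*(2*α₂)*1 + β₂*(2*α₂) < 0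
      nlinarith
    -- find a left neighborhood of 1 where G < 0
    have hGc : ContinuousAt G 1 := by fun_prop
    have hev : ∀ᶠ v in nhds (1:ℝ), G v < 0 := hGc.eventually_lt continuousAt_const hG1
    obtain ⟨l, u, hmem, hsub⟩ := mem_nhds_iff_exists_Ioo_subset.1 hev
    set t₀ : ℝ := max l (1/2) with ht₀
    have ht₀1 : t₀ < 1 := max_lt hmem.1 (by norm_num)
    have ht₀l : l ≤ t₀ := le_max_left _ _
    have ht₀half : (1/2 : ℝ) ≤ t₀ := le_max_right _ _
    have hsubIcc : Set.Icc t₀ 1 ⊆ Set.Icc (0:ℝ) 1 :=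
      Set.Icc_subset_Icc (by linarith) le_rfl
    have hanti : StrictAntiOn F (Set.Icc t₀ 1) := by
      apply strictAntiOn_of_deriv_neg (convex_Icc _ _) (hFcont.mono hsubIcc)
      intro v hv
      rw [interior_Icc] at hv
      have hv01 : v ∈ Set.Icc (0:ℝ) 1 := ⟨by linarith [hv.1], (hv.2).le⟩
      have hdpos := hden v hv01
      rw [((hder v (ne_of_gt hdpos)).deriv : deriv F v = G v / (C*v + D)^2)]
      apply div_neg_of_neg_of_pos
      · exact hsub ⟨lt_of_le_of_lt ht₀l hv.1, lt_trans hv.2 hmem.2⟩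
      · positivity
    have h1 : bF t₀ < bF 1 :=
      hmono (hsubIcc ⟨le_rfl, ht₀1.le⟩) ⟨by norm_num, le_rfl⟩ ht₀1
    have h2 : F 1 < F t₀ := hanti ⟨le_rfl, ht₀1.le⟩ ⟨ht₀1.le, le_rfl⟩ ht₀1
    rw [hEq t₀ (hsubIcc ⟨le_rfl, ht₀1.le⟩), hEq 1 ⟨by norm_num, le_rfl⟩] at h1
    linarith
  · -- backward: condition implies strict mono
    intro hcond
    have hGpos : ∀ v ∈ Set.Ioo (0:ℝ) 1, 0 < G v := by
      intro v hv
      obtain ⟨hv0, hv1⟩ := hv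
      have hP2 : 0 < (1-2*α₂)*(v+1) + 4*α₂ := by
        nlinarith [mul_nonneg ha0.le (by linarith : (0:ℝ) ≤ 1 - v)]
      rcases le_or_gt β₂ (1/2) with hb | hb
      · -- A ≥ 0 case
        have hA0 : 0 ≤ A := by rw [hA]; linarith
        have hP : 0 ≤ (1-2*α₂)*v + 4*α₂ := by
          nlinarith [mul_nonneg ha0.le (by linarith : (0:ℝ) ≤ 2 - v)]
        show (0:ℝ) < (2/3 - 4/3*β₂)*(1-2*α₂)*v^2 + 2*(2/3 - 4/3*β₂)*(2*α₂)*v + β₂*(2*α₂)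
        rw [hA] at hA0
        nlinarith [mul_pos ha0 hb0, mul_nonneg (mul_nonneg hA0 hv0.le) hP]
      · -- A < 0 case, use G v > G 1 ≥ 0
        have hge : 2*β₂ - 1 ≤ α₂ * (2 - β₂) := by
          rcases hcond with h | h
          · linarith
          · rw [ge_iff_le, div_le_iff₀ (by linarith : (0:ℝ) < 2 - β₂)] at h
            linarith
        have hA1 : 0 < (2/3 - 4/3*β₂)*(v-1) :=
          mul_pos_of_neg_of_neg (by linarith) (by linarith)
        show (0:ℝ) < (2/3 - 4/3*β₂)*(1-2*α₂)*v^2 + 2*(2/3 - 4/3*β₂)*(2*α₂)*v + β₂*(2*α₂)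
        nlinarith [mul_pos hA1 hP2]
    have hFmono : StrictMonoOn F (Set.Icc 0 1) := by
      apply strictMonoOn_of_deriv_pos (convex_Icc _ _) hFcont
      intro v hv
      rw [interior_Icc] at hv
      have hv01 : v ∈ Set.Icc (0:ℝ) 1 := ⟨hv.1.le, hv.2.le⟩
      have hdpos := hden v hv01
      rw [((hder v (ne_of_gt hdpos)).deriv : deriv F v = G v / (C*v + D)^2)]
      exact div_pos (hGpos v hv) (by positivity)
    intro x hx y hy hxy
    rw [hEq x hx, hEq y hy]
    exact hFmono hx hy hxy
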